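/- Let F be a field, A ∈ F^{n×n}, and R, C ⊆ {1,…,n}. Let L be a positive integer and set η = 2^{−L}. Suppose that for every i ∈ {1,…,L}, the number of rows r ∉ R with count_r ≥ 2^{i−1}ηn is less than n/2^i. Then |aug(R,C)| = ∑_{r ∉ R} count_r ≤ (ηn²/2)(L+2). (Equivalently: if A, R, C satisfy |aug(R,C)| > (ηn²/2)(L+2), then (R,C) has some augment pattern i ∈ {1,…,L}, meaning at least n/2^i rows r ∉ R satisfy count_r ≥ 2^{i−1}ηn.) -/

import Mathlib

open Matrix Finset
open scoped Classical

/-- The rank of the submatrix of `A` with rows indexed by `R` and columns by `C`. -/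
noncomputable def subRank {F : Type} [Field F] {n : ℕ} (A : Matrix (Fin n) (Fin n) F)
    (R C : Finset (Fin n)) : ℕ :=
  (A.submatrix (fun i : {x // x ∈ R} => i.1) (fun j : {x // x ∈ C} => j.1)).rank

/-- The augment set `aug(R,C)`. -/
noncomputable def augSet {F : Type} [Field F] {n : ℕ} (A : Matrix (Fin n) (Fin n) F)
    (R C : Finset (Fin n)) : Finset (Fin n × Fin n) :=
  Finset.univ.filter fun p : Fin n × Fin n =>
    p.1 ∉ R ∧ p.2 ∉ C ∧ subRank A R C < subRank A (insert p.1 R) (insert p.2 C)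

/-- `count_r`: the number of columns `c ∉ C` such that `(r, c) ∈ aug(R, C)`. -/
noncomputable def countAug {F : Type} [Field F] {n : ℕ} (A : Matrix (Fin n) (Fin n) F)
    (R C : Finset (Fin n)) (r : Fin n) : ℕ :=
  (Finset.univ.filter fun c : Fin n => (r, c) ∈ augSet A R C).card

lemma geom_aux (a : ℝ) (M : ℕ) : ∑ i ∈ Finset.Icc 1 M, (2:ℝ)^(i-1)*a = (2^M - 1)*a := by
  induction M with
  | zero => simp
  | succ M ih =>
    rw [Finset.sum_Icc_succ_top (by omega), ih]
    simp
    ring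

lemma layer_aux (a : ℝ) (ha : 0 ≤ a) :
    ∀ (L : ℕ) (x : ℝ), x ≤ 2^L * a →
      x ≤ a + ∑ i ∈ Finset.Icc 1 L, (if (2:ℝ)^(i-1)*a ≤ x then (2:ℝ)^(i-1)*a else 0) := by
  intro L
  induction L with
  | zero => intro x hx; simpa using hx
  | succ L ih =>
    intro x hx
    rw [Finset.sum_Icc_succ_top (by omega)]
    by_cases h : (2:ℝ)^(L+1-1)*a ≤ x
    · have hall : ∀ i ∈ Finset.Icc 1 (L+1), ((if (2:ℝ)^(i-1)*a ≤ x then (2:ℝ)^(i-1)*a else 0) = (2:ℝ)^(i-1)*a) := by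
        intro i hi
        simp only [Finset.mem_Icc] at hi
        rw [if_pos]
        refine le_trans ?_ h
        simp only [Nat.add_sub_cancel]
        exact mul_le_mul_of_nonneg_right (pow_le_pow_right₀ (by norm_num) (by omega)) ha
      rw [← Finset.sum_Icc_succ_top (by omega : 1 ≤ L+1)]
      rw [Finset.sum_congr rfl hall, geom_aux]
      have : a + ((2:ℝ)^(L+1) - 1)*a = 2^(L+1)*a := by ring
      rw [this]; exact hx
    · rw [if_neg h]
      have hx' : x ≤ 2^L * a := by
        simp only [Nat.add_sub_cancel] at h
        linarith [le_of_not_ge h]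
      linarith [ih x hx']

theorem stmt1 {F : Type} [Field F] {n : ℕ} (A : Matrix (Fin n) (Fin n) F)
    (R C : Finset (Fin n)) (L : ℕ) (hL : 0 < L) (η : ℝ) (hη : η = (2 : ℝ)⁻¹ ^ L)
    (hsmall : ∀ i ∈ Finset.Icc 1 L,
      ((Finset.univ.filter fun r : Fin n =>
          r ∉ R ∧ (2 : ℝ) ^ (i - 1) * η * (n : ℝ) ≤ (countAug A R C r : ℝ)).card : ℝ)
        < (n : ℝ) / 2 ^ i) :
    (augSet A R C).card = ∑ r ∈ Rᶜ, countAug A R C r ∧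
      ((augSet A R C).card : ℝ) ≤ η * (n : ℝ) ^ 2 / 2 * ((L : ℝ) + 2) := by
  have hη0 : 0 ≤ η := by rw [hη]; positivity
  have h2L : (2:ℝ)^L * η = 1 := by
    rw [hη, ← mul_pow]; norm_num
  -- Part 1: the cardinality identity
  have hcard : (augSet A R C).card = ∑ r ∈ Rᶜ, countAug A R C r := by
    rw [Finset.card_eq_sum_card_fiberwise (f := Prod.fst) (t := Rᶜ)
      (fun p hp => by
        rw [augSet, Finset.mem_coe, Finset.mem_filter] at hp
        simpa using hp.2.1)]
    refine Finset.sum_congr rfl fun r _ => ?_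
    symm
    unfold countAug
    refine Finset.card_bij (fun c _ => (r, c)) ?_ ?_ ?_
    · intro c hc
      simp only [Finset.mem_filter, Finset.mem_univ, true_and] at hc ⊢
      exact ⟨hc, trivial⟩
    · intro c _ c' _ h
      exact (Prod.mk.injEq _ _ _ _).mp h |>.2
    · rintro ⟨p1, p2⟩ hp
      simp only [Finset.mem_filter] at hp
      obtain ⟨hp1, rfl⟩ := hp
      exact ⟨p2, by simp [hp1], rfl⟩
  refine ⟨hcard, ?_⟩
  -- Part 2: the bound
  set a : ℝ := η * n with ha_def
  have ha0 : 0 ≤ a := by positivity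
  have hcount_le : ∀ r : Fin n, (countAug A R C r : ℝ) ≤ 2^L * a := by
    intro r
    have : countAug A R C r ≤ n := by
      have := Finset.card_filter_le (Finset.univ : Finset (Fin n))
        (fun c : Fin n => (r, c) ∈ augSet A R C)
      simpa [countAug] using this
    calc (countAug A R C r : ℝ) ≤ n := by exact_mod_cast this
    _ = 2^L * a := by rw [ha_def, ← mul_assoc, h2L, one_mul]
  have hpoint : ∀ r : Fin n, (countAug A R C r : ℝ) ≤
      a + ∑ i ∈ Finset.Icc 1 L,
        (if (2:ℝ)^(i-1)*a ≤ (countAug A R C r : ℝ) then (2:ℝ)^(i-1)*a else 0) :=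
    fun r => layer_aux a ha0 L _ (hcount_le r)
  have hsum1 : ((augSet A R C).card : ℝ) ≤
      (Rᶜ.card : ℝ) * a + ∑ i ∈ Finset.Icc 1 L, ∑ r ∈ Rᶜ,
        (if (2:ℝ)^(i-1)*a ≤ (countAug A R C r : ℝ) then (2:ℝ)^(i-1)*a else 0) := by
    rw [hcard]
    push_cast
    rw [Finset.sum_comm]
    calc (∑ r ∈ Rᶜ, (countAug A R C r : ℝ))
        ≤ ∑ r ∈ Rᶜ, (a + ∑ i ∈ Finset.Icc 1 L,
          (if (2:ℝ)^(i-1)*a ≤ (countAug A R C r : ℝ) then (2:ℝ)^(i-1)*a else 0)) :=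
          Finset.sum_le_sum fun r _ => hpoint r
      _ = _ := by rw [Finset.sum_add_distrib, Finset.sum_const, nsmul_eq_mul]
  -- bound each inner sum
  have hinner : ∀ i ∈ Finset.Icc 1 L, (∑ r ∈ Rᶜ,
      (if (2:ℝ)^(i-1)*a ≤ (countAug A R C r : ℝ) then (2:ℝ)^(i-1)*a else 0)) ≤ a * n / 2 := by
    intro i hi
    simp only [Finset.mem_Icc] at hi
    rw [← Finset.sum_filter, Finset.sum_const, nsmul_eq_mul]
    have hsub : Rᶜ.filter (fun r => (2:ℝ)^(i-1)*a ≤ (countAug A R C r : ℝ)) ⊆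
        Finset.univ.filter (fun r : Fin n =>
          r ∉ R ∧ (2 : ℝ) ^ (i - 1) * η * (n : ℝ) ≤ (countAug A R C r : ℝ)) := by
      intro r hr
      simp only [Finset.mem_filter, Finset.mem_compl] at hr ⊢
      exact ⟨Finset.mem_univ r, hr.1, by rw [mul_assoc]; exact hr.2⟩
    have hc1 : ((Rᶜ.filter (fun r => (2:ℝ)^(i-1)*a ≤ (countAug A R C r : ℝ))).card : ℝ)
        ≤ (n : ℝ) / 2 ^ i :=
      le_of_lt (lt_of_le_of_lt (by exact_mod_cast Finset.card_le_card hsub) (hsmall i (by simp [hi.1, hi.2])))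
    have h2i : (2:ℝ)^i = 2^(i-1) * 2 := by
      rw [← pow_succ]
      congr 1
      omega
    have hpow : (0:ℝ) < 2^(i-1) := by positivity
    calc ((Rᶜ.filter (fun r => (2:ℝ)^(i-1)*a ≤ (countAug A R C r : ℝ))).card : ℝ) * ((2:ℝ)^(i-1)*a)
        ≤ ((n : ℝ) / 2 ^ i) * ((2:ℝ)^(i-1)*a) :=
          mul_le_mul_of_nonneg_right hc1 (by positivity)
      _ = a * n / 2 := by rw [h2i]; field_simp
  have hRc : (Rᶜ.card : ℝ) ≤ n := by
    have := Finset.card_le_univ Rᶜ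
    simp only [Finset.card_univ, Fintype.card_fin] at this
    exact_mod_cast this
  have hsum2 : (∑ i ∈ Finset.Icc 1 L, ∑ r ∈ Rᶜ,
      (if (2:ℝ)^(i-1)*a ≤ (countAug A R C r : ℝ) then (2:ℝ)^(i-1)*a else 0)) ≤
      (L : ℝ) * (a * n / 2) := by
    calc _ ≤ ∑ _i ∈ Finset.Icc 1 L, (a * n / 2) := Finset.sum_le_sum hinner
    _ = (L : ℝ) * (a * n / 2) := by
      rw [Finset.sum_const, nsmul_eq_mul, Nat.card_Icc]
      norm_num
  have : ((augSet A R C).card : ℝ) ≤ (n : ℝ) * a + (L : ℝ) * (a * n / 2) := by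
    refine le_trans hsum1 (add_le_add (mul_le_mul_of_nonneg_right hRc ha0) hsum2)
  calc ((augSet A R C).card : ℝ) ≤ (n : ℝ) * a + (L : ℝ) * (a * n / 2) := this
  _ = η * (n : ℝ) ^ 2 / 2 * ((L : ℝ) + 2) := by rw [ha_def]; ring
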